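/- arXiv:1912.11575 — 7 statements merged into one kernel-verified Lean document; each statement's English description precedes it below -/
import Mathlib

section
/- For any p, q ∈ ℝ⁴ there exists a vector u ∈ ℝ⁴ such that uᵀ(A(p,q) − I) = 0 (i.e. uᵀ A(p,q) = uᵀ) and such that D(p,q,f) = u·f for every f ∈ ℝ⁴. In particular, the map f ↦ D(p,q,f) is a linear functional represented by a left fixed vector of A(p,q). -/
open Matrix

/-- The Markov (state-transition) matrix of the iterated game determined by
the pool's strategy `p` and the miner's strategy `q`. -/
def Amat (p q : Fin 4 → ℝ) : Matrix (Fin 4) (Fin 4) ℝ :=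
  Matrix.of fun i =>
    ![p i * q i, p i * (1 - q i), (1 - p i) * q i, (1 - p i) * (1 - q i)]

/-- The Press–Dyson determinant `D(p,q,f)`. -/
def Ddet (p q f : Fin 4 → ℝ) : ℝ :=
  (!![p 0 * q 0 - 1, p 0 - 1, q 0 - 1, f 0;
      p 1 * q 1,     p 1 - 1, q 1,     f 1;
      p 2 * q 2,     p 2,     q 2 - 1, f 2;
      p 3 * q 3,     p 3,     q 3,     f 3]).det

set_option maxHeartbeats 1000000 in
lemma my_det_fin_four (M : Matrix (Fin 4) (Fin 4) ℝ) :
    M.det =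
      M 0 0*M 1 1*M 2 2*M 3 3 - M 0 0*M 1 1*M 2 3*M 3 2
      - M 0 0*M 1 2*M 2 1*M 3 3 + M 0 0*M 1 2*M 2 3*M 3 1
      + M 0 0*M 1 3*M 2 1*M 3 2 - M 0 0*M 1 3*M 2 2*M 3 1
      - M 0 1*M 1 0*M 2 2*M 3 3 + M 0 1*M 1 0*M 2 3*M 3 2
      + M 0 1*M 1 2*M 2 0*M 3 3 - M 0 1*M 1 2*M 2 3*M 3 0
      - M 0 1*M 1 3*M 2 0*M 3 2 + M 0 1*M 1 3*M 2 2*M 3 0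
      + M 0 2*M 1 0*M 2 1*M 3 3 - M 0 2*M 1 0*M 2 3*M 3 1
      - M 0 2*M 1 1*M 2 0*M 3 3 + M 0 2*M 1 1*M 2 3*M 3 0
      + M 0 2*M 1 3*M 2 0*M 3 1 - M 0 2*M 1 3*M 2 1*M 3 0
      - M 0 3*M 1 0*M 2 1*M 3 2 + M 0 3*M 1 0*M 2 2*M 3 1
      + M 0 3*M 1 1*M 2 0*M 3 2 - M 0 3*M 1 1*M 2 2*M 3 0
      - M 0 3*M 1 2*M 2 0*M 3 1 + M 0 3*M 1 2*M 2 1*M 3 0 := by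
  simp [Matrix.det_succ_row_zero, Fin.sum_univ_succ, Matrix.det_fin_three,
    show (Fin.succ 2 : Fin 4) = 3 from rfl,
    show Fin.succAbove (2 : Fin 4) (2 : Fin 3) = 3 from rfl,
    show Fin.succAbove (1 : Fin 4) (2 : Fin 3) = 3 from rfl,
    show Fin.succAbove (3 : Fin 4) (2 : Fin 3) = 2 from rfl,
    show Fin.castSucc (2 : Fin 3) = 2 from rfl]
  ring

set_option maxHeartbeats 1000000 in
/-- there is a left fixed vector `u` of `A(p,q)` such that
`D(p,q,f) = u ⬝ f` for every `f`. -/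
theorem exists_left_fixed_vector_representing_Ddet (p q : Fin 4 → ℝ) :
    ∃ u : Fin 4 → ℝ,
      Matrix.vecMul u (Amat p q) = u ∧ ∀ f : Fin 4 → ℝ, Ddet p q f = u ⬝ᵥ f := by
  refine ⟨![
    -p 1*p 2*q 1*q 3 + p 1*p 2*q 2*q 3 - p 1*p 3*q 1 + p 1*p 3*q 1*q 2 - p 1*p 3*q 2*q 3 + p 1*p 3*q 3 - p 2*p 3*q 1*q 2 + p 2*p 3*q 1*q 3 - p 2*q 2*q 3 + p 3*q 2*q 3 - p 3*q 3,
    p 0*p 2*q 0*q 3 - p 0*p 2*q 2*q 3 + p 0*p 3*q 0 - p 0*p 3*q 0*q 2 + p 0*p 3*q 2*q 3 - p 0*p 3*q 3 + p 2*p 3*q 0*q 2 - p 2*p 3*q 0*q 3 - p 2*p 3*q 2 + p 2*p 3*q 3 + p 2*q 2*q 3 - p 2*q 3 - p 3 + p 3*q 2 - p 3*q 2*q 3 + p 3*q 3,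
    -p 0*p 1*q 0*q 3 + p 0*p 1*q 1*q 3 + p 0*p 3*q 0*q 1 - p 0*p 3*q 1*q 3 + p 0*q 0*q 3 - p 1*p 3*q 0*q 1 + p 1*p 3*q 0*q 3 + p 1*p 3*q 1 - p 1*p 3*q 3 - p 1*q 1*q 3 + p 1*q 3 - p 3*q 0*q 3 - p 3*q 1 + p 3*q 1*q 3 + p 3*q 3 - q 3,
    -1 - p 0*p 1*q 0 + p 0*p 1*q 0*q 2 + p 0*p 1*q 1 - p 0*p 1*q 1*q 2 - p 0*p 2*q 0*q 1 + p 0*p 2*q 1*q 2 + p 0*q 0 - p 0*q 0*q 2 + p 1 + p 1*p 2*q 0*q 1 - p 1*p 2*q 0*q 2 - p 1*p 2*q 1 + p 1*p 2*q 2 - p 1*q 1 + p 1*q 1*q 2 - p 1*q 2 + p 2*q 0*q 2 + p 2*q 1 - p 2*q 1*q 2 - p 2*q 2 + q 2], ?_, ?_⟩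
  · funext j
    fin_cases j <;>
    · simp only [Matrix.vecMul, Amat, dotProduct, Fin.sum_univ_four, Matrix.of_apply,
        Matrix.cons_val', Matrix.cons_val_zero, Matrix.cons_val_one, Matrix.head_cons,
        Matrix.empty_val', Matrix.cons_val_fin_one, Matrix.head_fin_const,
        Matrix.cons_val_two, Matrix.tail_cons, Matrix.cons_val_three, Fin.isValue]
      norm_num
      ring
  · intro f
    rw [Ddet, my_det_fin_four]
    simp only [dotProduct, Fin.sum_univ_four, Matrix.cons_val', Matrix.cons_val_zero,
      Matrix.cons_val_one, Matrix.head_cons, Matrix.empty_val', Matrix.cons_val_fin_one,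
      Matrix.of_apply, Matrix.cons_val_two, Matrix.tail_cons, Matrix.cons_val_three, Fin.isValue]
    norm_num
    ring
end

section
/- For any p, q ∈ ℝ⁴ and any vector v ∈ ℝ⁴ satisfying vᵀ A(p,q) = vᵀ, the identity (v·f)·D(p,q,g) = (v·g)·D(p,q,f) holds for all f, g ∈ ℝ⁴. That is, the dot product of a stationary (left fixed) vector of A(p,q) with an arbitrary vector f is proportional to the determinant D(p,q,f), with a proportionality constant independent of f. -/
open Matrix

set_option maxRecDepth 100000 in
lemma det_fin_four' (M : Matrix (Fin 4) (Fin 4) ℝ) :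
    M.det =
      M 0 0 * (M 1 1*(M 2 2*M 3 3 - M 2 3*M 3 2) - M 1 2*(M 2 1*M 3 3 - M 2 3*M 3 1) + M 1 3*(M 2 1*M 3 2 - M 2 2*M 3 1))
    - M 0 1 * (M 1 0*(M 2 2*M 3 3 - M 2 3*M 3 2) - M 1 2*(M 2 0*M 3 3 - M 2 3*M 3 0) + M 1 3*(M 2 0*M 3 2 - M 2 2*M 3 0))
    + M 0 2 * (M 1 0*(M 2 1*M 3 3 - M 2 3*M 3 1) - M 1 1*(M 2 0*M 3 3 - M 2 3*M 3 0) + M 1 3*(M 2 0*M 3 1 - M 2 1*M 3 0))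
    - M 0 3 * (M 1 0*(M 2 1*M 3 2 - M 2 2*M 3 1) - M 1 1*(M 2 0*M 3 2 - M 2 2*M 3 0) + M 1 2*(M 2 0*M 3 1 - M 2 1*M 3 0)) := by
  rw [Matrix.det_succ_row_zero]
  simp [Fin.sum_univ_succ, Matrix.det_fin_three, Matrix.submatrix_apply, Fin.succAbove_zero, Fin.succ_succAbove_zero, Fin.succ_succAbove_succ, Fin.succ_succAbove_one, Fin.one_succAbove_zero, Fin.one_succAbove_one, Fin.zero_succAbove, show Fin.succAbove (1 : Fin 4) 2 = 3 from rfl, show Fin.succAbove (2 : Fin 4) 2 = 3 from rfl, show Fin.succAbove (3 : Fin 4) 2 = 2 from rfl]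
  ring

set_option maxRecDepth 100000 in
set_option maxHeartbeats 2000000 in
/-- for any left fixed (stationary) vector `v` of `A(p,q)`, the
dot product `v ⬝ f` is proportional to `D(p,q,f)` with a constant independent
of `f`:  `(v·f) D(p,q,g) = (v·g) D(p,q,f)` for all `f, g`. -/
theorem stationary_dot_proportional_Ddet (p q v : Fin 4 → ℝ)
    (hv : Matrix.vecMul v (Amat p q) = v) (f g : Fin 4 → ℝ) :
    (v ⬝ᵥ f) * Ddet p q g = (v ⬝ᵥ g) * Ddet p q f := by
  have h0 := congrFun hv 0
  have h1 := congrFun hv 1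
  have h2 := congrFun hv 2
  simp only [Amat, Matrix.vecMul, dotProduct, Fin.sum_univ_four, Matrix.of_apply,
    Matrix.cons_val', Matrix.cons_val_zero, Matrix.cons_val_one, Matrix.head_cons,
    Matrix.empty_val', Matrix.cons_val_fin_one, Matrix.head_fin_const,
    Matrix.cons_val_two, Matrix.cons_val_three, Matrix.tail_cons] at h0 h1 h2
  simp (config := { maxSteps := 10000000 }) only [dotProduct, Fin.sum_univ_four, Ddet, det_fin_four',
    Matrix.cons_val', Matrix.cons_val_zero, Matrix.cons_val_one, Matrix.head_cons,
    Matrix.empty_val', Matrix.cons_val_fin_one, Matrix.head_fin_const, Matrix.of_apply,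
    Matrix.cons_val_two, Matrix.cons_val_three, Matrix.tail_cons,]
  let c0 : ℝ := (f 0)*(g 1)*(p 2)*(p 3)*(q 2) + (-1)*(f 0)*(g 1)*(p 2)*(p 3)*(q 3) + (-1)*(f 0)*(g 1)*(p 2)*(q 2)*(q 3) + (f 0)*(g 1)*(p 2)*(q 3) + (f 0)*(g 1)*(p 3) + (-1)*(f 0)*(g 1)*(p 3)*(q 2) + (f 0)*(g 1)*(p 3)*(q 2)*(q 3) + (-1)*(f 0)*(g 1)*(p 3)*(q 3) + (-1)*(f 0)*(g 2)*(p 1)*(p 3)*(q 1) + (f 0)*(g 2)*(p 1)*(p 3)*(q 3) + (f 0)*(g 2)*(p 1)*(q 1)*(q 3) + (-1)*(f 0)*(g 2)*(p 1)*(q 3) + (f 0)*(g 2)*(p 3)*(q 1) + (-1)*(f 0)*(g 2)*(p 3)*(q 1)*(q 3) + (-1)*(f 0)*(g 2)*(p 3)*(q 3) + (f 0)*(g 2)*(q 3) + (f 0)*(g 3) + (-1)*(f 0)*(g 3)*(p 1) + (f 0)*(g 3)*(p 1)*(p 2)*(q 1) + (-1)*(f 0)*(g 3)*(p 1)*(p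 2)*(q 2) + (f 0)*(g 3)*(p 1)*(q 1) + (-1)*(f 0)*(g 3)*(p 1)*(q 1)*(q 2) + (f 0)*(g 3)*(p 1)*(q 2) + (-1)*(f 0)*(g 3)*(p 2)*(q 1) + (f 0)*(g 3)*(p 2)*(q 1)*(q 2) + (f 0)*(g 3)*(p 2)*(q 2) + (-1)*(f 0)*(g 3)*(q 2) + (-1)*(f 1)*(g 0)*(p 2)*(p 3)*(q 2) + (f 1)*(g 0)*(p 2)*(p 3)*(q 3) + (f 1)*(g 0)*(p 2)*(q 2)*(q 3) + (-1)*(f 1)*(g 0)*(p 2)*(q 3) + (-1)*(f 1)*(g 0)*(p 3) + (f 1)*(g 0)*(p 3)*(q 2) + (-1)*(f 1)*(g 0)*(p 3)*(q 2)*(q 3) + (f 1)*(g 0)*(p 3)*(q 3) + (f 1)*(g 2)*(p 0)*(p 3)*(q 0) + (-1)*(f 1)*(g 2)*(p 0)*(p 3)*(q 3) + (-1)*(f 1)*(g 2)*(p 0)*(q 0)*(q 3) + (f 1)*(g 2)*(p 0)*(q 3) + (-1)*(f 1)*(g 2)*(p 3)*(q 0) + (f 1)*(g 2)*(p 3)*(q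 0)*(q 3) + (f 1)*(g 3)*(p 0) + (-1)*(f 1)*(g 3)*(p 0)*(p 2)*(q 0) + (f 1)*(g 3)*(p 0)*(p 2)*(q 2) + (-1)*(f 1)*(g 3)*(p 0)*(q 0) + (f 1)*(g 3)*(p 0)*(q 0)*(q 2) + (-1)*(f 1)*(g 3)*(p 0)*(q 2) + (f 1)*(g 3)*(p 2)*(q 0) + (-1)*(f 1)*(g 3)*(p 2)*(q 0)*(q 2) + (f 2)*(g 0)*(p 1)*(p 3)*(q 1) + (-1)*(f 2)*(g 0)*(p 1)*(p 3)*(q 3) + (-1)*(f 2)*(g 0)*(p 1)*(q 1)*(q 3) + (f 2)*(g 0)*(p 1)*(q 3) + (-1)*(f 2)*(g 0)*(p 3)*(q 1) + (f 2)*(g 0)*(p 3)*(q 1)*(q 3) + (f 2)*(g 0)*(p 3)*(q 3) + (-1)*(f 2)*(g 0)*(q 3) + (-1)*(f 2)*(g 1)*(p 0)*(p 3)*(q 0) + (f 2)*(g 1)*(p 0)*(p 3)*(q 3) + (f 2)*(g 1)*(p 0)*(q 0)*(q 3) + (-1)*(f 2)*(g 1)*(p 0)*(q 3) + (f 2)*(g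 1)*(p 3)*(q 0) + (-1)*(f 2)*(g 1)*(p 3)*(q 0)*(q 3) + (f 2)*(g 3)*(p 0)*(p 1)*(q 0) + (-1)*(f 2)*(g 3)*(p 0)*(p 1)*(q 1) + (-1)*(f 2)*(g 3)*(p 0)*(q 0) + (-1)*(f 2)*(g 3)*(p 0)*(q 0)*(q 1) + (f 2)*(g 3)*(p 0)*(q 1) + (-1)*(f 2)*(g 3)*(p 1)*(q 0) + (f 2)*(g 3)*(p 1)*(q 0)*(q 1) + (f 2)*(g 3)*(q 0) + (-1)*(f 3)*(g 0) + (f 3)*(g 0)*(p 1) + (-1)*(f 3)*(g 0)*(p 1)*(p 2)*(q 1) + (f 3)*(g 0)*(p 1)*(p 2)*(q 2) + (-1)*(f 3)*(g 0)*(p 1)*(q 1) + (f 3)*(g 0)*(p 1)*(q 1)*(q 2) + (-1)*(f 3)*(g 0)*(p 1)*(q 2) + (f 3)*(g 0)*(p 2)*(q 1) + (-1)*(f 3)*(g 0)*(p 2)*(q 1)*(q 2) + (-1)*(f 3)*(g 0)*(p 2)*(q 2) + (f 3)*(g 0)*(q 2) + (-1)*(f 3)*(g 1)*(p 0) + (f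 3)*(g 1)*(p 0)*(p 2)*(q 0) + (-1)*(f 3)*(g 1)*(p 0)*(p 2)*(q 2) + (f 3)*(g 1)*(p 0)*(q 0) + (-1)*(f 3)*(g 1)*(p 0)*(q 0)*(q 2) + (f 3)*(g 1)*(p 0)*(q 2) + (-1)*(f 3)*(g 1)*(p 2)*(q 0) + (f 3)*(g 1)*(p 2)*(q 0)*(q 2) + (-1)*(f 3)*(g 2)*(p 0)*(p 1)*(q 0) + (f 3)*(g 2)*(p 0)*(p 1)*(q 1) + (f 3)*(g 2)*(p 0)*(q 0) + (f 3)*(g 2)*(p 0)*(q 0)*(q 1) + (-1)*(f 3)*(g 2)*(p 0)*(q 1) + (f 3)*(g 2)*(p 1)*(q 0) + (-1)*(f 3)*(g 2)*(p 1)*(q 0)*(q 1) + (-1)*(f 3)*(g 2)*(q 0)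
  let c1 : ℝ := (-1)*(f 0)*(g 1)*(p 2)*(q 2)*(q 3) + (f 0)*(g 1)*(p 3)*(q 2)*(q 3) + (-1)*(f 0)*(g 1)*(p 3)*(q 3) + (f 0)*(g 2)*(p 1)*(q 1)*(q 3) + (-1)*(f 0)*(g 2)*(p 3)*(q 1)*(q 3) + (f 0)*(g 3)*(p 1)*(q 1) + (-1)*(f 0)*(g 3)*(p 1)*(q 1)*(q 2) + (f 0)*(g 3)*(p 2)*(q 1)*(q 2) + (f 1)*(g 0)*(p 2)*(q 2)*(q 3) + (-1)*(f 1)*(g 0)*(p 3)*(q 2)*(q 3) + (f 1)*(g 0)*(p 3)*(q 3) + (-1)*(f 1)*(g 2)*(p 0)*(q 0)*(q 3) + (f 1)*(g 2)*(p 3)*(q 0)*(q 3) + (-1)*(f 1)*(g 2)*(p 3)*(q 3) + (f 1)*(g 2)*(q 3) + (f 1)*(g 3) + (-1)*(f 1)*(g 3)*(p 0)*(q 0) + (f 1)*(g 3)*(p 0)*(q 0)*(q 2) + (-1)*(f 1)*(g 3)*(p 2)*(q 0)*(q 2) + (f 1)*(g 3)*(p 2)*(q 2) + (-1)*(f 1)*(g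 3)*(q 2) + (-1)*(f 2)*(g 0)*(p 1)*(q 1)*(q 3) + (f 2)*(g 0)*(p 3)*(q 1)*(q 3) + (f 2)*(g 1)*(p 0)*(q 0)*(q 3) + (-1)*(f 2)*(g 1)*(p 3)*(q 0)*(q 3) + (f 2)*(g 1)*(p 3)*(q 3) + (-1)*(f 2)*(g 1)*(q 3) + (-1)*(f 2)*(g 3)*(p 0)*(q 0)*(q 1) + (f 2)*(g 3)*(p 1)*(q 0)*(q 1) + (-1)*(f 2)*(g 3)*(p 1)*(q 1) + (f 2)*(g 3)*(q 1) + (-1)*(f 3)*(g 0)*(p 1)*(q 1) + (f 3)*(g 0)*(p 1)*(q 1)*(q 2) + (-1)*(f 3)*(g 0)*(p 2)*(q 1)*(q 2) + (-1)*(f 3)*(g 1) + (f 3)*(g 1)*(p 0)*(q 0) + (-1)*(f 3)*(g 1)*(p 0)*(q 0)*(q 2) + (f 3)*(g 1)*(p 2)*(q 0)*(q 2) + (-1)*(f 3)*(g 1)*(p 2)*(q 2) + (f 3)*(g 1)*(q 2) + (f 3)*(g 2)*(p 0)*(q 0)*(q 1) + (-1)*(f 3)*(g 2)*(p 1)*(q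 0)*(q 1) + (f 3)*(g 2)*(p 1)*(q 1) + (-1)*(f 3)*(g 2)*(q 1)
  let c2 : ℝ := (f 0)*(g 1)*(p 2)*(p 3)*(q 2) + (-1)*(f 0)*(g 1)*(p 2)*(p 3)*(q 3) + (-1)*(f 0)*(g 2)*(p 1)*(p 3)*(q 1) + (f 0)*(g 2)*(p 1)*(p 3)*(q 3) + (-1)*(f 0)*(g 2)*(p 3)*(q 3) + (f 0)*(g 3)*(p 1)*(p 2)*(q 1) + (-1)*(f 0)*(g 3)*(p 1)*(p 2)*(q 2) + (f 0)*(g 3)*(p 2)*(q 2) + (-1)*(f 1)*(g 0)*(p 2)*(p 3)*(q 2) + (f 1)*(g 0)*(p 2)*(p 3)*(q 3) + (f 1)*(g 2)*(p 0)*(p 3)*(q 0) + (-1)*(f 1)*(g 2)*(p 0)*(p 3)*(q 3) + (-1)*(f 1)*(g 2)*(p 3) + (f 1)*(g 2)*(p 3)*(q 3) + (-1)*(f 1)*(g 3)*(p 0)*(p 2)*(q 0) + (f 1)*(g 3)*(p 0)*(p 2)*(q 2) + (f 1)*(g 3)*(p 2) + (-1)*(f 1)*(g 3)*(p 2)*(q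 2) + (f 2)*(g 0)*(p 1)*(p 3)*(q 1) + (-1)*(f 2)*(g 0)*(p 1)*(p 3)*(q 3) + (f 2)*(g 0)*(p 3)*(q 3) + (-1)*(f 2)*(g 1)*(p 0)*(p 3)*(q 0) + (f 2)*(g 1)*(p 0)*(p 3)*(q 3) + (f 2)*(g 1)*(p 3) + (-1)*(f 2)*(g 1)*(p 3)*(q 3) + (f 2)*(g 3) + (f 2)*(g 3)*(p 0)*(p 1)*(q 0) + (-1)*(f 2)*(g 3)*(p 0)*(p 1)*(q 1) + (-1)*(f 2)*(g 3)*(p 0)*(q 0) + (-1)*(f 2)*(g 3)*(p 1) + (f 2)*(g 3)*(p 1)*(q 1) + (-1)*(f 3)*(g 0)*(p 1)*(p 2)*(q 1) + (f 3)*(g 0)*(p 1)*(p 2)*(q 2) + (-1)*(f 3)*(g 0)*(p 2)*(q 2) + (f 3)*(g 1)*(p 0)*(p 2)*(q 0) + (-1)*(f 3)*(g 1)*(p 0)*(p 2)*(q 2) + (-1)*(f 3)*(g 1)*(p 2) + (f 3)*(g 1)*(p 2)*(q 2) + (-1)*(f 3)*(g 2) + (-1)*(f 3)*(g 2)*(p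 0)*(p 1)*(q 0) + (f 3)*(g 2)*(p 0)*(p 1)*(q 1) + (f 3)*(g 2)*(p 0)*(q 0) + (f 3)*(g 2)*(p 1) + (-1)*(f 3)*(g 2)*(p 1)*(q 1)
  linear_combination c0 * h0 + c1 * h1 + c2 * h2
end

section
/- Let p, q ∈ ℝ⁴ and let v ∈ ℝ⁴ satisfy vᵀ A(p,q) = vᵀ and v·𝟙 = 1, where 𝟙 = (1,1,1,1). If D(p,q,𝟙) ≠ 0, then for every payoff vector S ∈ ℝ⁴ the expected payoff under the stationary vector v satisfies v·S = D(p,q,S) / D(p,q,𝟙). -/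
open Matrix

lemma det_fin_four_expand (A : Matrix (Fin 4) (Fin 4) ℝ) :
    A.det =
      A 0 0 * (A 1 1 * A 2 2 * A 3 3 - A 1 1 * A 2 3 * A 3 2 - A 1 2 * A 2 1 * A 3 3 + A 1 2 * A 2 3 * A 3 1 + A 1 3 * A 2 1 * A 3 2 - A 1 3 * A 2 2 * A 3 1)
    - A 0 1 * (A 1 0 * A 2 2 * A 3 3 - A 1 0 * A 2 3 * A 3 2 - A 1 2 * A 2 0 * A 3 3 + A 1 2 * A 2 3 * A 3 0 + A 1 3 * A 2 0 * A 3 2 - A 1 3 * A 2 2 * A 3 0)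
    + A 0 2 * (A 1 0 * A 2 1 * A 3 3 - A 1 0 * A 2 3 * A 3 1 - A 1 1 * A 2 0 * A 3 3 + A 1 1 * A 2 3 * A 3 0 + A 1 3 * A 2 0 * A 3 1 - A 1 3 * A 2 1 * A 3 0)
    - A 0 3 * (A 1 0 * A 2 1 * A 3 2 - A 1 0 * A 2 2 * A 3 1 - A 1 1 * A 2 0 * A 3 2 + A 1 1 * A 2 2 * A 3 0 + A 1 2 * A 2 0 * A 3 1 - A 1 2 * A 2 1 * A 3 0) := by
  rw [Matrix.det_succ_row_zero, Fin.sum_univ_four]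
  simp [Matrix.det_fin_three, Matrix.submatrix_apply, Fin.succAbove, Fin.lt_def, show (Fin.succ 2 : Fin 4) = 3 from rfl, show (Fin.castSucc 2 : Fin 4) = 2 from rfl, show ((3 : Fin 4) : ℕ) = 3 from rfl, show ((2 : Fin 4) : ℕ) = 2 from rfl, show ((1 : Fin 4) : ℕ) = 1 from rfl]
  ring

set_option maxRecDepth 8000 in
set_option maxHeartbeats 1600000 in
/-- for a normalized stationary vector `v` of `A(p,q)`, provided
`D(p,q,𝟙) ≠ 0`, the expected payoff satisfies
`v·S = D(p,q,S) / D(p,q,𝟙)` for every payoff vector `S`. -/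
theorem expected_payoff_eq_Ddet_ratio (p q v : Fin 4 → ℝ)
    (hv : Matrix.vecMul v (Amat p q) = v)
    (hnorm : v ⬝ᵥ (fun _ => (1 : ℝ)) = 1)
    (hD : Ddet p q (fun _ => (1 : ℝ)) ≠ 0) :
    ∀ S : Fin 4 → ℝ, v ⬝ᵥ S = Ddet p q S / Ddet p q (fun _ => (1 : ℝ)) := by
  intro S
  have h1 := congrFun hv 1
  have h2 := congrFun hv 2
  have h3 := congrFun hv 3
  simp only [Matrix.vecMul, Amat, Matrix.of_apply, dotProduct, Fin.sum_univ_four,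
    Matrix.cons_val_one, Matrix.cons_val_zero, Matrix.head_cons, Matrix.cons_val_two,
    Matrix.tail_cons, Matrix.cons_val_three, Matrix.head_fin_const] at h1 h2 h3
  simp only [dotProduct, Fin.sum_univ_four, mul_one] at hnorm
  have key : v ⬝ᵥ S * Ddet p q (fun _ => (1 : ℝ)) = Ddet p q S := by
    simp [Ddet, det_fin_four_expand, dotProduct, Fin.sum_univ_four, Matrix.vecHead, Matrix.vecTail]
    linear_combination
      (S 1 - S 0 + q 3*S 1 - q 3*S 0 - q 2*S 1 + q 2*S 0 - q 1*S 3 + q 1*S 2 + q 0*S 3 - q 0*S 2 + p 3*S 1 - p 3*S 0 - p 3*q 3*S 1 + p 3*q 3*S 0 - p 3*q 2*S 1 + p 3*q 2*S 0 + p 3*q 1*S 2 - p 3*q 1*S 0 - p 3*q 0*S 2 + p 3*q 0*S 1 + p 2*q 3*S 1 - p 2*q 3*S 0 + p 2*q 2*S 1 - p 2*q 2*S 0 - p 2*q 1*S 3 + p 2*q 1*S 0 + p 2*q 0*S 3 - p 2*q 0*S 1 - p 2*p 3*q 3*S 1 + p 2*p 3*q 3*S 0 + p 2*p 3*q 2*S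 1 - p 2*p 3*q 2*S 0 - p 1*S 3 + p 1*S 0 - p 1*q 3*S 2 + p 1*q 3*S 0 + p 1*q 2*S 3 - p 1*q 2*S 0 + p 1*q 1*S 3 - p 1*q 1*S 2 - p 1*q 0*S 3 + p 1*q 0*S 2 + p 1*p 3*q 3*S 2 - p 1*p 3*q 3*S 0 - p 1*p 3*q 1*S 2 + p 1*p 3*q 1*S 0 - p 1*p 2*q 2*S 3 + p 1*p 2*q 2*S 0 + p 1*p 2*q 1*S 3 - p 1*p 2*q 1*S 0 + p 0*S 3 - p 0*S 1 + p 0*q 3*S 2 - p 0*q 3*S 1 - p 0*q 2*S 3 + p 0*q 2*S 1 + p 0*q 1*S 3 - p 0*q 1*S 2 - p 0*q 0*S 3 + p 0*q 0*S 2 - p 0*p 3*q 3*S 2 + p 0*p 3*q 3*S 1 + p 0*p 3*q 0*S 2 - p 0*p 3*q 0*S 1 + p 0*p 2*q 2*S 3 - p 0*p 2*q 2*S 1 - p 0*p 2*q 0*S 3 + p 0*p 2*q 0*S 1 - p 0*p 1*q 1*S 3 + p 0*p 1*q 1*S 2 + p 0*p 1*q 0*S 3 - p 0*p 1*q 0*S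 2) * h1 +
      (S 2 - S 0 + q 3*S 2 - q 3*S 0 - q 2*S 3 + q 2*S 0 + q 0*S 3 - q 0*S 2 + p 3*S 2 - p 3*S 0 - p 3*q 3*S 2 + p 3*q 3*S 0 - p 3*q 2*S 1 + p 3*q 2*S 0 + p 3*q 2*q 3*S 1 - p 3*q 2*q 3*S 0 + p 3*q 1*S 2 - p 3*q 1*S 0 - p 3*q 1*q 3*S 2 + p 3*q 1*q 3*S 0 - p 3*q 0*S 2 + p 3*q 0*S 1 + p 3*q 0*q 3*S 2 - p 3*q 0*q 3*S 1 - p 2*S 3 + p 2*S 1 + p 2*q 3*S 1 - p 2*q 3*S 0 + p 2*q 2*S 3 - p 2*q 2*S 1 - p 2*q 2*q 3*S 1 + p 2*q 2*q 3*S 0 - p 2*q 1*S 3 + p 2*q 1*S 0 + p 2*q 1*q 2*S 3 - p 2*q 1*q 2*S 0 + p 2*q 0*S 3 - p 2*q 0*S 1 - p 2*q 0*q 2*S 3 + p 2*q 0*q 2*S 1 - p 1*S 2 + p 1*S 0 - p 1*q 3*S 2 + p 1*q 3*S 0 + p 1*q 2*S 3 - p 1*q 2*S 0 + p 1*q 1*S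 2 - p 1*q 1*S 0 + p 1*q 1*q 3*S 2 - p 1*q 1*q 3*S 0 - p 1*q 1*q 2*S 3 + p 1*q 1*q 2*S 0 - p 1*q 0*S 3 + p 1*q 0*S 2 + p 1*q 0*q 1*S 3 - p 1*q 0*q 1*S 2 + p 0*S 3 - p 0*S 1 + p 0*q 3*S 2 - p 0*q 3*S 1 - p 0*q 2*S 3 + p 0*q 2*S 1 + p 0*q 1*S 3 - p 0*q 1*S 2 - p 0*q 0*S 3 + p 0*q 0*S 1 - p 0*q 0*q 3*S 2 + p 0*q 0*q 3*S 1 + p 0*q 0*q 2*S 3 - p 0*q 0*q 2*S 1 - p 0*q 0*q 1*S 3 + p 0*q 0*q 1*S 2) * h2 +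
      (S 3 - S 0 + q 3*S 2 - q 3*S 0 - q 2*S 3 + q 2*S 0 + q 0*S 3 - q 0*S 2 + p 3*S 1 - p 3*S 0 - p 3*q 3*S 2 - p 3*q 3*S 1 + 2*p 3*q 3*S 0 - p 3*q 2*S 1 + p 3*q 2*S 0 + p 3*q 2*q 3*S 1 - p 3*q 2*q 3*S 0 + p 3*q 1*S 2 - p 3*q 1*S 0 - p 3*q 1*q 3*S 2 + p 3*q 1*q 3*S 0 - p 3*q 0*S 2 + p 3*q 0*S 1 + p 3*q 0*q 3*S 2 - p 3*q 0*q 3*S 1 + p 2*q 3*S 1 - p 2*q 3*S 0 + p 2*q 2*S 3 - p 2*q 2*S 0 - p 2*q 2*q 3*S 1 + p 2*q 2*q 3*S 0 - p 2*q 1*S 3 + p 2*q 1*S 0 + p 2*q 1*q 2*S 3 - p 2*q 1*q 2*S 0 + p 2*q 0*S 3 - p 2*q 0*S 1 - p 2*q 0*q 2*S 3 + p 2*q 0*q 2*S 1 - p 2*p 3*q 3*S 1 + p 2*p 3*q 3*S 0 + p 2*p 3*q 2*S 1 - p 2*p 3*q 2*S 0 - p 1*S 3 + p 1*S 0 - p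 1*q 3*S 2 + p 1*q 3*S 0 + p 1*q 2*S 3 - p 1*q 2*S 0 + p 1*q 1*S 3 - p 1*q 1*S 0 + p 1*q 1*q 3*S 2 - p 1*q 1*q 3*S 0 - p 1*q 1*q 2*S 3 + p 1*q 1*q 2*S 0 - p 1*q 0*S 3 + p 1*q 0*S 2 + p 1*q 0*q 1*S 3 - p 1*q 0*q 1*S 2 + p 1*p 3*q 3*S 2 - p 1*p 3*q 3*S 0 - p 1*p 3*q 1*S 2 + p 1*p 3*q 1*S 0 - p 1*p 2*q 2*S 3 + p 1*p 2*q 2*S 0 + p 1*p 2*q 1*S 3 - p 1*p 2*q 1*S 0 + p 0*S 3 - p 0*S 1 + p 0*q 3*S 2 - p 0*q 3*S 1 - p 0*q 2*S 3 + p 0*q 2*S 1 + p 0*q 1*S 3 - p 0*q 1*S 2 - 2*p 0*q 0*S 3 + p 0*q 0*S 2 + p 0*q 0*S 1 - p 0*q 0*q 3*S 2 + p 0*q 0*q 3*S 1 + p 0*q 0*q 2*S 3 - p 0*q 0*q 2*S 1 - p 0*q 0*q 1*S 3 + p 0*q 0*q 1*S 2 - p 0*p 3*q 3*S 2 + p 0*p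 3*q 3*S 1 + p 0*p 3*q 0*S 2 - p 0*p 3*q 0*S 1 + p 0*p 2*q 2*S 3 - p 0*p 2*q 2*S 1 - p 0*p 2*q 0*S 3 + p 0*p 2*q 0*S 1 - p 0*p 1*q 1*S 3 + p 0*p 1*q 1*S 2 + p 0*p 1*q 0*S 3 - p 0*p 1*q 0*S 2) * h3 +
      (- S 3 - q 3*S 2 + q 2*S 3 - p 3*S 1 + p 3*q 3*S 2 + p 3*q 3*S 1 - p 3*q 3*S 0 + p 3*q 2*S 1 - p 3*q 2*q 3*S 1 + p 3*q 2*q 3*S 0 - p 3*q 1*S 2 + p 3*q 1*q 3*S 2 - p 3*q 0*q 3*S 2 - p 2*q 3*S 1 - p 2*q 2*S 3 + p 2*q 2*q 3*S 1 - p 2*q 2*q 3*S 0 + p 2*q 1*S 3 - p 2*q 1*q 2*S 3 + p 2*q 0*q 2*S 3 + p 2*p 3*q 3*S 1 - p 2*p 3*q 2*S 1 + p 2*p 3*q 1*q 3*S 0 - p 2*p 3*q 1*q 2*S 0 - p 2*p 3*q 0*q 3*S 1 + p 2*p 3*q 0*q 2*S 1 + p 1*S 3 + p 1*q 3*S 2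 - p 1*q 2*S 3 - p 1*q 1*S 3 - p 1*q 1*q 3*S 2 + p 1*q 1*q 2*S 3 - p 1*p 3*q 3*S 2 + p 1*p 3*q 3*S 0 - p 1*p 3*q 2*q 3*S 0 + p 1*p 3*q 1*S 2 - p 1*p 3*q 1*S 0 + p 1*p 3*q 1*q 2*S 0 + p 1*p 3*q 0*q 3*S 2 - p 1*p 3*q 0*q 1*S 2 + p 1*p 2*q 2*S 3 + p 1*p 2*q 2*q 3*S 0 - p 1*p 2*q 1*S 3 - p 1*p 2*q 1*q 3*S 0 - p 1*p 2*q 0*q 2*S 3 + p 1*p 2*q 0*q 1*S 3 + p 0*q 0*S 3 + p 0*q 0*q 3*S 2 - p 0*q 0*q 2*S 3 - p 0*p 3*q 3*S 1 + p 0*p 3*q 2*q 3*S 1 - p 0*p 3*q 1*q 3*S 2 + p 0*p 3*q 0*S 1 - p 0*p 3*q 0*q 2*S 1 + p 0*p 3*q 0*q 1*S 2 - p 0*p 2*q 2*q 3*S 1 + p 0*p 2*q 1*q 2*S 3 + p 0*p 2*q 0*q 3*S 1 - p 0*p 2*q 0*q 1*S 3 + p 0*p 1*q 1*S 3 + p 0*p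 1*q 1*q 3*S 2 - p 0*p 1*q 1*q 2*S 3 - p 0*p 1*q 0*S 3 - p 0*p 1*q 0*q 3*S 2 + p 0*p 1*q 0*q 2*S 3) * hnorm
  field_simp
  linarith [key]
end

section
/- Let K_p, K_m, π, μ, σ, ρ ∈ ℝ, let S_p = (K_p, K_p−π, K_p+μ, K_p−π+μ), S_m = (K_m, K_m+σ, K_m−ρ, K_m+σ−ρ), and 𝟙 = (1,1,1,1). Suppose p = (p₁,p₂,p₃,p₄) ∈ ℝ⁴ and α, β, γ ∈ ℝ satisfy the componentwise zero-determinant condition (p₁−1, p₂−1, p₃, p₄) = α S_p + β S_m + γ 𝟙. Then for every q ∈ ℝ⁴, D(p, q, α S_p + β S_m + γ 𝟙) = 0; moreover, for any v ∈ ℝ⁴ with vᵀ A(p,q) = vᵀ, v·𝟙 = 1 and D(p,q,𝟙) ≠ 0, the expected payoffs satisfy the linear relation α (v·S_p) + β (v·S_m) + γ = 0. -/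
open Matrix

/-- Explicit cofactor expansion of a `4 × 4` determinant. -/
lemma det4 (M : Matrix (Fin 4) (Fin 4) ℝ) :
    M.det =
      M 0 0 * (M 1 1 * (M 2 2 * M 3 3 - M 2 3 * M 3 2) - M 1 2 * (M 2 1 * M 3 3 - M 2 3 * M 3 1)
        + M 1 3 * (M 2 1 * M 3 2 - M 2 2 * M 3 1))
      - M 0 1 * (M 1 0 * (M 2 2 * M 3 3 - M 2 3 * M 3 2) - M 1 2 * (M 2 0 * M 3 3 - M 2 3 * M 3 0)
        + M 1 3 * (M 2 0 * M 3 2 - M 2 2 * M 3 0))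
      + M 0 2 * (M 1 0 * (M 2 1 * M 3 3 - M 2 3 * M 3 1) - M 1 1 * (M 2 0 * M 3 3 - M 2 3 * M 3 0)
        + M 1 3 * (M 2 0 * M 3 1 - M 2 1 * M 3 0))
      - M 0 3 * (M 1 0 * (M 2 1 * M 3 2 - M 2 2 * M 3 1) - M 1 1 * (M 2 0 * M 3 2 - M 2 2 * M 3 0)
        + M 1 2 * (M 2 0 * M 3 1 - M 2 1 * M 3 0)) := by
  rw [Matrix.det_succ_row_zero, Fin.sum_univ_four]
  simp [Matrix.det_fin_three, Matrix.submatrix_apply, Fin.succAbove, Fin.lt_def,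
    show (Fin.succ 2 : Fin 4) = 3 from rfl, show (Fin.succ 0 : Fin 4) = 1 from rfl,
    show (Fin.succ 1 : Fin 4) = 2 from rfl, show (Fin.castSucc 2 : Fin 4) = 2 from rfl,
    show ((3 : Fin 4) : ℕ) = 3 from rfl]
  norm_num
  ring

/-- `D(p,q,f)` vanishes when `f` coincides with the second column. -/
lemma Ddet_zero_of_col (p q f : Fin 4 → ℝ)
    (h0 : f 0 = p 0 - 1) (h1 : f 1 = p 1 - 1) (h2 : f 2 = p 2) (h3 : f 3 = p 3) :
    Ddet p q f = 0 := by
  rw [Ddet, det4]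
  simp [h0, h1, h2, h3]
  ring

/-- Linearity of `D(p,q,·)` used below. -/
lemma Ddet_sub_smul (p q f g : Fin 4 → ℝ) (c : ℝ) :
    Ddet p q (f - c • g) = Ddet p q f - c * Ddet p q g := by
  simp only [Ddet, det4, Pi.sub_apply, Pi.smul_apply, smul_eq_mul]
  simp
  ring

/-- If `v` is a normalized stationary vector of `A(p,q)` and `v ⬝ᵥ f = 0`,
then `D(p,q,f) = 0` (the Press–Dyson matrix has `v` in its left kernel). -/
lemma Ddet_zero_of_stationary (p q v f : Fin 4 → ℝ)
    (hv : Matrix.vecMul v (Amat p q) = v)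
    (hf : v ⬝ᵥ f = 0)
    (hone : v ⬝ᵥ (fun _ => (1 : ℝ)) = 1) :
    Ddet p q f = 0 := by
  have e0 := congrFun hv 0
  have e1 := congrFun hv 1
  have e2 := congrFun hv 2
  have e3 := congrFun hv 3
  simp [Amat, Matrix.vecMul, dotProduct, Fin.sum_univ_four] at e0 e1 e2 e3
  have hfd : v 0 * f 0 + v 1 * f 1 + v 2 * f 2 + v 3 * f 3 = 0 := by
    simpa [dotProduct, Fin.sum_univ_four] using hf
  have hvne : v ≠ 0 := by
    intro h
    rw [h] at hone
    simp [dotProduct] at hone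
  rw [Ddet, ← Matrix.exists_vecMul_eq_zero_iff]
  refine ⟨v, hvne, ?_⟩
  funext j
  fin_cases j
  · simp [Matrix.vecMul, dotProduct, Fin.sum_univ_four]
    linear_combination e0
  · simp [Matrix.vecMul, dotProduct, Fin.sum_univ_four]
    linear_combination e0 + e1
  · simp [Matrix.vecMul, dotProduct, Fin.sum_univ_four]
    linear_combination e0 + e2
  · simp [Matrix.vecMul, dotProduct, Fin.sum_univ_four]
    linear_combination hfd

/-- if the pool's strategy satisfies the zero-determinant
condition `(p₁−1, p₂−1, p₃, p₄) = α S_p + β S_m + γ 𝟙`, then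
`D(p,q, α S_p + β S_m + γ 𝟙) = 0` for every `q`; moreover, for any normalized
stationary vector `v` of `A(p,q)` with `D(p,q,𝟙) ≠ 0`, the expected payoffs
satisfy `α S_p + β S_m + γ = 0`. -/
theorem zd_strategy_linear_payoff_relation
    (Kp Km π μ σ ρ : ℝ) (p : Fin 4 → ℝ) (α β γ : ℝ)
    (Sp Sm : Fin 4 → ℝ)
    (hSp : Sp = ![Kp, Kp - π, Kp + μ, Kp - π + μ])
    (hSm : Sm = ![Km, Km + σ, Km - ρ, Km + σ - ρ])
    (hZD : ![p 0 - 1, p 1 - 1, p 2, p 3] =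
      α • Sp + β • Sm + γ • (fun _ => (1 : ℝ))) :
    (∀ q : Fin 4 → ℝ,
        Ddet p q (α • Sp + β • Sm + γ • (fun _ => (1 : ℝ))) = 0) ∧
    (∀ q v : Fin 4 → ℝ,
        Matrix.vecMul v (Amat p q) = v →
        v ⬝ᵥ (fun _ => (1 : ℝ)) = 1 →
        Ddet p q (fun _ => (1 : ℝ)) ≠ 0 →
        α * (v ⬝ᵥ Sp) + β * (v ⬝ᵥ Sm) + γ = 0) := by
  set F : Fin 4 → ℝ := α • Sp + β • Sm + γ • (fun _ => (1 : ℝ)) with hF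
  have hF0 : F 0 = p 0 - 1 := by simpa using (congrFun hZD 0).symm
  have hF1 : F 1 = p 1 - 1 := by simpa using (congrFun hZD 1).symm
  have hF2 : F 2 = p 2 := by simpa using (congrFun hZD 2).symm
  have hF3 : F 3 = p 3 := by simpa using (congrFun hZD 3).symm
  have part1 : ∀ q : Fin 4 → ℝ, Ddet p q F = 0 := fun q =>
    Ddet_zero_of_col p q F hF0 hF1 hF2 hF3
  refine ⟨part1, ?_⟩
  intro q v hv hone hD
  -- let d be the expected value of F under v
  set d : ℝ := v ⬝ᵥ F with hd
  -- the vector F - d • 1 has zero expectation, hence zero Press–Dyson determinant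
  have hzero : Ddet p q (F - d • (fun _ => (1 : ℝ))) = 0 := by
    apply Ddet_zero_of_stationary p q v _ hv _ hone
    rw [dotProduct_sub, dotProduct_smul, hone]
    simp [hd]
  rw [Ddet_sub_smul, part1 q, zero_sub, neg_eq_zero] at hzero
  have hdz : d = 0 := by
    rcases mul_eq_zero.mp hzero with h | h
    · exact h
    · exact absurd h hD
  -- unfold d
  have : α * (v ⬝ᵥ Sp) + β * (v ⬝ᵥ Sm) + γ * (v ⬝ᵥ (fun _ => (1 : ℝ))) = 0 := by
    rw [← hdz, hd, hF]
    rw [dotProduct_add, dotProduct_add,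
      dotProduct_smul, dotProduct_smul, dotProduct_smul]
    simp [smul_eq_mul]
  rw [hone, mul_one] at this
  exact this
end

section
/- Let K_m ∈ ℝ and ρ > σ with σ, ρ ∈ ℝ, and let S_m = (K_m, K_m+σ, K_m−ρ, K_m+σ−ρ). Let p = (p₁,p₂,p₃,p₄) ∈ ℝ⁴ with 1 − p₁ + p₄ ≠ 0, where p₂ = (p₁ρ − (1+p₄)σ)/(ρ−σ) and p₃ = ((1−p₁)σ + p₄ρ)/(ρ−σ). Then for every q ∈ ℝ⁴ and every v ∈ ℝ⁴ with vᵀ A(p,q) = vᵀ, v·𝟙 = 1 and D(p,q,𝟙) ≠ 0, the miner's expected payoff is unilaterally fixed by the pool: v·S_m = ((1−p₁)(K_m+σ−ρ) + p₄ K_m)/(1 − p₁ + p₄), independently of q. -/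
open Matrix

/-- under the pool's zero-determinant strategy (with `p₂` and `p₃`
given by the ZD formulas and `1 − p₁ + p₄ ≠ 0`), the miner's expected payoff
is unilaterally fixed at `((1−p₁)(K_m+σ−ρ) + p₄ K_m)/(1 − p₁ + p₄)`,
independently of the miner's strategy `q`. -/
theorem zd_pool_sets_miner_payoff
    (Km σ ρ : ℝ) (hρσ : ρ > σ) (p : Fin 4 → ℝ)
    (hp2 : p 1 = (p 0 * ρ - (1 + p 3) * σ) / (ρ - σ))
    (hp3 : p 2 = ((1 - p 0) * σ + p 3 * ρ) / (ρ - σ))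
    (hden : 1 - p 0 + p 3 ≠ 0) :
    ∀ q v : Fin 4 → ℝ,
      Matrix.vecMul v (Amat p q) = v →
      v ⬝ᵥ (fun _ => (1 : ℝ)) = 1 →
      Ddet p q (fun _ => (1 : ℝ)) ≠ 0 →
      v ⬝ᵥ ![Km, Km + σ, Km - ρ, Km + σ - ρ] =
        ((1 - p 0) * (Km + σ - ρ) + p 3 * Km) / (1 - p 0 + p 3) := by
  intro q v hst hnorm _
  have hrs : ρ - σ ≠ 0 := sub_ne_zero.mpr (ne_of_gt hρσ)
  have h0 := congrFun hst 0
  have h1 := congrFun hst 1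
  simp [Amat, Matrix.vecMul, dotProduct, Fin.sum_univ_four] at h0 h1
  have hN : v 0 + v 1 + v 2 + v 3 = 1 := by
    simpa [dotProduct, Fin.sum_univ_four] using hnorm
  -- key Press–Dyson relation from stationarity components 0 and 1
  have hE : v 0 * (p 0 - 1) + v 1 * (p 1 - 1) + v 2 * p 2 + v 3 * p 3 = 0 := by
    nlinarith [h0, h1]
  rw [hp2, hp3] at hE
  have hE' : v 0 * (p 0 - 1) * (ρ - σ) + v 1 * ((p 0 * ρ - (1 + p 3) * σ) - (ρ - σ))
      + v 2 * ((1 - p 0) * σ + p 3 * ρ) + v 3 * p 3 * (ρ - σ) = 0 := by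
    field_simp at hE
    linarith [hE]
  simp only [dotProduct, Fin.sum_univ_four, Matrix.cons_val_zero,
    Matrix.cons_val_one, Matrix.head_cons, Matrix.cons_val_two, Matrix.tail_cons,
    Matrix.cons_val_three]
  rw [eq_div_iff hden]
  linear_combination (Km * (1 - p 0 + p 3) - (1 - p 0) * (ρ - σ)) * hN - hE'
end

section
/- Let K_p ∈ ℝ and π, μ ∈ ℝ with π > μ > 0, and let S_p = (K_p, K_p−π, K_p+μ, K_p−π+μ). Suppose p = (p₁,p₂,p₃,p₄) ∈ [0,1]⁴ and α, γ ∈ ℝ satisfy (p₁−1, p₂−1, p₃, p₄) = α S_p + γ 𝟙 componentwise. Then necessarily p = (1,1,0,0), α = 0 and γ = 0. In other words, the pool cannot use a zero-determinant strategy to unilaterally set his own expected payoff: the only feasible strategy of this form is the trivial one p = (1,1,0,0). -/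
/-- the pool cannot use a zero-determinant strategy to set his
own expected payoff: if `p ∈ [0,1]⁴` satisfies
`(p₁−1, p₂−1, p₃, p₄) = α S_p + γ 𝟙` with `π > μ > 0`, then necessarily
`p = (1,1,0,0)`, `α = 0` and `γ = 0`. -/
theorem pool_cannot_set_own_payoff
    (Kp π μ : ℝ) (hπμ : π > μ) (hμ : μ > 0)
    (p : Fin 4 → ℝ) (α γ : ℝ)
    (hp : ∀ i, p i ∈ Set.Icc (0 : ℝ) 1)
    (Sp : Fin 4 → ℝ)
    (hSp : Sp = ![Kp, Kp - π, Kp + μ, Kp - π + μ])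
    (hZD : ![p 0 - 1, p 1 - 1, p 2, p 3] = α • Sp + γ • (fun _ => (1 : ℝ))) :
    p = ![1, 1, 0, 0] ∧ α = 0 ∧ γ = 0 := by
  subst hSp
  have h0 := congr_fun hZD 0
  have h1 := congr_fun hZD 1
  have h2 := congr_fun hZD 2
  have h3 := congr_fun hZD 3
  simp [Pi.add_apply, Pi.smul_apply, smul_eq_mul] at h0 h1 h2 h3
  have hp0 := hp 0
  have hp1 := hp 1
  have hp2 := hp 2
  have hp3 := hp 3
  simp [Set.mem_Icc] at hp0 hp1 hp2 hp3
  have hα : α = 0 := by nlinarith [hp0.1, hp0.2, hp1.1, hp1.2, hp2.1, hp2.2, hp3.1, hp3.2]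
  subst hα
  have hγ : γ = 0 := by nlinarith [hp0.2, hp2.1]
  subst hγ
  refine ⟨?_, rfl, rfl⟩
  funext i
  fin_cases i <;> simp <;> linarith [h0, h1, h2, h3]
end

section
/- Let K_m ∈ ℝ and σ, ρ ∈ ℝ with ρ > σ, and define S_m(p₁,p₄) = ((1−p₁)(K_m+σ−ρ) + p₄ K_m)/(1 − p₁ + p₄) on the domain where p₁, p₄ ∈ [0,1] and 1 − p₁ + p₄ > 0. Then: (i) S_m is strictly increasing in p₁ whenever p₄ > 0, and strictly increasing in p₄ whenever p₁ < 1 (its partial derivatives are ∂S_m/∂p₁ = p₄(ρ−σ)/(1−p₁+p₄)² and ∂S_m/∂p₄ = (1−p₁)(ρ−σ)/(1−p₁+p₄)²); (ii) S_m(p₁,p₄) ≤ K_m on the whole domain, with equality if and only if p₁ = 1. In particular the maximal expected payoff K_m = S_m^{cc} the pool can assign to the miner is attained exactly when p₁ = 1. -/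
open Set

/-- The miner's expected payoff set by the pool's zero-determinant strategy
determined by `p₁` and `p₄`. -/
noncomputable def SmVal (Km σ ρ p₁ p₄ : ℝ) : ℝ :=
  ((1 - p₁) * (Km + σ - ρ) + p₄ * Km) / (1 - p₁ + p₄)

/-- on the domain `p₁, p₄ ∈ [0,1]`, `1 − p₁ + p₄ > 0`:
(i) `S_m` is strictly increasing in `p₁` whenever `p₄ > 0` and strictly
increasing in `p₄` whenever `p₁ < 1`, with partial derivatives
`p₄(ρ−σ)/(1−p₁+p₄)²` and `(1−p₁)(ρ−σ)/(1−p₁+p₄)²` respectively;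
(ii) `S_m ≤ K_m` on the whole domain, with equality iff `p₁ = 1`. -/
theorem zd_miner_payoff_monotone_and_maximal
    (Km σ ρ : ℝ) (hρσ : ρ > σ) :
    -- strictly increasing in p₁ whenever p₄ > 0
    (∀ p₁ p₁' p₄ : ℝ, p₁ ∈ Icc (0:ℝ) 1 → p₁' ∈ Icc (0:ℝ) 1 →
        p₄ ∈ Icc (0:ℝ) 1 → 0 < p₄ → p₁ < p₁' →
        SmVal Km σ ρ p₁ p₄ < SmVal Km σ ρ p₁' p₄) ∧
    -- strictly increasing in p₄ whenever p₁ < 1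
    (∀ p₁ p₄ p₄' : ℝ, p₁ ∈ Icc (0:ℝ) 1 → p₄ ∈ Icc (0:ℝ) 1 →
        p₄' ∈ Icc (0:ℝ) 1 → p₁ < 1 → p₄ < p₄' →
        SmVal Km σ ρ p₁ p₄ < SmVal Km σ ρ p₁ p₄') ∧
    -- partial derivative formulas
    (∀ p₁ p₄ : ℝ, p₁ ∈ Icc (0:ℝ) 1 → p₄ ∈ Icc (0:ℝ) 1 → 0 < 1 - p₁ + p₄ →
        HasDerivAt (fun x => SmVal Km σ ρ x p₄)
          (p₄ * (ρ - σ) / (1 - p₁ + p₄) ^ 2) p₁ ∧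
        HasDerivAt (fun y => SmVal Km σ ρ p₁ y)
          ((1 - p₁) * (ρ - σ) / (1 - p₁ + p₄) ^ 2) p₄) ∧
    -- S_m ≤ K_m with equality iff p₁ = 1
    (∀ p₁ p₄ : ℝ, p₁ ∈ Icc (0:ℝ) 1 → p₄ ∈ Icc (0:ℝ) 1 → 0 < 1 - p₁ + p₄ →
        SmVal Km σ ρ p₁ p₄ ≤ Km ∧ (SmVal Km σ ρ p₁ p₄ = Km ↔ p₁ = 1)) := by
  refine ⟨?_, ?_, ?_, ?_⟩
  · intro p₁ p₁' p₄ h1 h1' h4 hp4 hlt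
    have d1 : 0 < 1 - p₁ + p₄ := by cases h1; linarith
    have d2 : 0 < 1 - p₁' + p₄ := by cases h1'; linarith
    unfold SmVal
    rw [div_lt_div_iff₀ d1 d2]
    nlinarith [mul_pos hp4 (sub_pos.mpr hρσ), mul_pos (mul_pos hp4 (sub_pos.mpr hρσ)) (sub_pos.mpr hlt)]
  · intro p₁ p₄ p₄' h1 h4 h4' hp1 hlt
    have d1 : 0 < 1 - p₁ + p₄ := by cases h4; linarith
    have d2 : 0 < 1 - p₁ + p₄' := by cases h4; linarith
    unfold SmVal
    rw [div_lt_div_iff₀ d1 d2]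
    nlinarith [mul_pos (sub_pos.mpr hp1) (sub_pos.mpr hρσ), sub_pos.mpr hlt]
  · intro p₁ p₄ h1 h4 hd
    constructor
    · have hne : (1 - p₁ + p₄) ≠ 0 := ne_of_gt hd
      have hf : HasDerivAt (fun x : ℝ => (1 - x) * (Km + σ - ρ) + p₄ * Km)
          (-(Km + σ - ρ)) p₁ := by
        have := ((hasDerivAt_id p₁).const_sub 1).mul_const (Km + σ - ρ)
        simpa using this.add_const (p₄ * Km)
      have hg : HasDerivAt (fun x : ℝ => 1 - x + p₄) (-1) p₁ := by
        simpa using ((hasDerivAt_id p₁).const_sub 1).add_const p₄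
      have := hf.div hg hne
      refine this.congr_deriv ?_
      field_simp
      ring
    · have hne : (1 - p₁ + p₄) ≠ 0 := ne_of_gt hd
      have hf : HasDerivAt (fun y : ℝ => (1 - p₁) * (Km + σ - ρ) + y * Km) Km p₄ := by
        simpa using (((hasDerivAt_id p₄).mul_const Km).const_add ((1 - p₁) * (Km + σ - ρ)))
      have hg : HasDerivAt (fun y : ℝ => 1 - p₁ + y) 1 p₄ := by
        simpa using (hasDerivAt_id p₄).const_add (1 - p₁)
      have := hf.div hg hne
      refine this.congr_deriv ?_
      field_simp
      ring
  · intro p₁ p₄ h1 h4 hd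
    have hne : (1 - p₁ + p₄) ≠ 0 := ne_of_gt hd
    have key : SmVal Km σ ρ p₁ p₄ = Km - (1 - p₁) * (ρ - σ) / (1 - p₁ + p₄) := by
      unfold SmVal; field_simp; ring
    have hnum : 0 ≤ (1 - p₁) * (ρ - σ) := by
      apply mul_nonneg (by cases h1; linarith) (by linarith)
    constructor
    · rw [key]; have := div_nonneg hnum hd.le; linarith
    · rw [key]
      constructor
      · intro h
        have h0 : (1 - p₁) * (ρ - σ) / (1 - p₁ + p₄) = 0 := by linarith
        have := (div_eq_zero_iff.mp h0).resolve_right hne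
        have := (mul_eq_zero.mp this).resolve_right (by linarith)
        linarith
      · intro h; subst h; simp
end
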